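/- Let 𝔽 be a Hilbert space, D = (φ_i)_{i∈ℕ} a dictionary, and π : ℕ → ℕ of at most polynomial growth. For each finite I ⊆ ℕ let (φ̃^I_i)_{i∈I} be an orthonormalization of (φ_i)_{i∈I}. For M ∈ ℕ and c > 0 define Σ̃^{π,c}_M = { Σ_{i∈I} c̃_i φ̃^I_i : I ⊆ {1,…,π(M)}, |I| ≤ M, c̃_i ∈ [−c,c] }. Then the sequence (Σ̃^{π,c}_M)_{M∈ℕ} is ∞-encodable in 𝔽. -/

import Mathlib

open scoped ENNReal BigOperators
open Filter

noncomputable section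


private lemma grid_pt_abs_le {c : ℝ} (hc : 0 < c) {K : ℕ} (hK : 1 ≤ K) {j : ℕ} (hj : j < K) :
    |(-c + c * (2 * (j : ℝ) + 1) / K)| ≤ c := by
  have hK0 : (0 : ℝ) < K := by exact_mod_cast hK
  rw [abs_le]
  constructor
  · have : 0 < c * (2 * (j : ℝ) + 1) / K := by positivity
    linarith
  · have h1 : (j : ℝ) + 1 ≤ K := by exact_mod_cast hj
    have h2 : c * (2 * (j : ℝ) + 1) / K ≤ 2 * c := by
      rw [div_le_iff₀ hK0]
      nlinarith
    linarith

private lemma grid_approx {c : ℝ} (hc : 0 < c) {K : ℕ} (hK : 1 ≤ K) {x : ℝ} (hx : |x| ≤ c) :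
    ∃ j ∈ Finset.range K, |x - (-c + c * (2 * (j : ℝ) + 1) / K)| ≤ c / K := by
  have hK0 : (0 : ℝ) < K := by exact_mod_cast hK
  obtain ⟨hx1, hx2⟩ := abs_le.mp hx
  set y : ℝ := (x + c) * K / (2 * c) with hy
  have hy0 : 0 ≤ y := by
    apply div_nonneg _ (by positivity)
    apply mul_nonneg (by linarith) (le_of_lt hK0)
  have hyK : y ≤ K := by
    rw [hy, div_le_iff₀ (by positivity)]
    nlinarith
  set j : ℕ := min ⌊y⌋₊ (K - 1) with hj
  have hjK : j < K := lt_of_le_of_lt (min_le_right _ _) (by omega)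
  refine ⟨j, Finset.mem_range.mpr hjK, ?_⟩
  have hjy : (j : ℝ) ≤ y := by
    have : (j : ℝ) ≤ (⌊y⌋₊ : ℝ) := by exact_mod_cast min_le_left _ _
    exact this.trans (Nat.floor_le hy0)
  have hyj : y ≤ (j : ℝ) + 1 := by
    by_cases hcase : ⌊y⌋₊ ≤ K - 1
    · have hje : j = ⌊y⌋₊ := min_eq_left hcase
      rw [hje]
      exact le_of_lt (Nat.lt_floor_add_one y)
    · have hKf : K ≤ ⌊y⌋₊ := by omega
      have hje : j = K - 1 := min_eq_right (by omega)
      have : (K : ℝ) ≤ ⌊y⌋₊ := by exact_mod_cast hKf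
      have hyK' : (K : ℝ) ≤ y := this.trans (Nat.floor_le hy0)
      have : ((j : ℝ) + 1) = K := by
        rw [hje]
        have : ((K - 1 : ℕ) : ℝ) = (K : ℝ) - 1 := by
          have : (1 : ℕ) ≤ K := hK
          push_cast [Nat.cast_sub this]
          ring
        rw [this]; ring
      linarith
  have hxy : x - (-c + c * (2 * (j : ℝ) + 1) / K) = (2 * c / K) * (y - (j : ℝ) - 1 / 2) := by
    have hc0 : c ≠ 0 := ne_of_gt hc
    have hK0' : (K : ℝ) ≠ 0 := ne_of_gt hK0
    have hcy : c * y * 2 = (x + c) * K := by rw [hy]; field_simp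
    field_simp [hy]
    linear_combination (-1 : ℝ) * hcy
  rw [hxy, abs_mul, abs_of_pos (by positivity : (0:ℝ) < 2 * c / K)]
  have habs : |y - (j : ℝ) - 1 / 2| ≤ 1 / 2 := by
    rw [abs_le]; constructor <;> linarith
  calc 2 * c / K * |y - (j : ℝ) - 1 / 2| ≤ 2 * c / K * (1 / 2) :=
        mul_le_mul_of_nonneg_left habs (by positivity)
    _ = c / K := by ring

private lemma logb_nat_le {h : ℝ} (hh : 0 < h) :
    ∃ C : ℝ, 0 < C ∧ ∀ M : ℕ, 1 ≤ M → Real.logb 2 M ≤ C * (M : ℝ) ^ h := by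
  have hl2 : 0 < Real.log 2 := Real.log_pos one_lt_two
  refine ⟨1 / (h * Real.log 2), by positivity, fun M hM => ?_⟩
  have hM0 : (0 : ℝ) ≤ M := Nat.cast_nonneg M
  have hlog : Real.log M ≤ (M : ℝ) ^ h / h := Real.log_le_rpow_div hM0 hh
  rw [Real.logb]
  calc Real.log M / Real.log 2 ≤ ((M : ℝ) ^ h / h) / Real.log 2 := by gcongr
    _ = 1 / (h * Real.log 2) * (M : ℝ) ^ h := by field_simp



/-- The approximation speed `γ*(C|Σ) = sup { γ ∈ ℝ : sup_{f∈C} d(f,Σ_M) = O(M^{−γ}) }`,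
as an extended real (`⊥ = −∞` if the set is empty). -/
def approxSpeed {F : Type*} [PseudoMetricSpace F] (C : Set F) (S : ℕ → Set F) : EReal :=
  sSup {x : EReal | ∃ γ : ℝ, x = (γ : EReal) ∧ ∃ c : ℝ, 0 < c ∧
    ∀ᶠ M : ℕ in atTop, ∀ f ∈ C, Metric.infDist f (S M) ≤ c * (M : ℝ) ^ (-γ)}

/-- The encoding speed `γ*(C) = sup { γ > 0 : log₂ N(C,d,ε) = O(ε^{−1/γ}) as ε → 0 }`
(with value `0` if the supremum is over an empty set), where `N(C,d,ε)` is the minimal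
cardinality of a finite subset of `C` whose closed `ε`-balls cover `C`. -/
def encodingSpeed {F : Type*} [PseudoMetricSpace F] (C : Set F) : EReal :=
  sSup ({(0 : EReal)} ∪ {x : EReal | ∃ γ : ℝ, 0 < γ ∧ x = (γ : EReal) ∧ ∃ c : ℝ, 0 < c ∧
    ∀ᶠ ε : ℝ in nhdsWithin 0 (Set.Ioi 0), ∃ X : Finset F, ↑X ⊆ C ∧
      (C ⊆ ⋃ y ∈ X, Metric.closedBall y ε) ∧
      (X.card : ℝ) ≤ 2 ^ (c * ε ^ (-(1 / γ)))})

/-- `Σ = (Σ_M)` is `γ`-encodable: for every `h > 0` there are `c₁, c₂ > 0` and, for each `M`,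
a finite subset of `Σ_M` which is a `c₁ M^{−γ}`-covering of `Σ_M` and whose base-2 log of the
cardinality is at most `c₂ M^{1+h}`. -/
def IsEncodable {F : Type*} [PseudoMetricSpace F] (S : ℕ → Set F) (γ : ℝ) : Prop :=
  ∀ h : ℝ, 0 < h → ∃ c₁ : ℝ, 0 < c₁ ∧ ∃ c₂ : ℝ, 0 < c₂ ∧ ∀ M : ℕ, 1 ≤ M →
    ∃ X : Finset F, ↑X ⊆ S M ∧
      (S M ⊆ ⋃ y ∈ X, Metric.closedBall y (c₁ * (M : ℝ) ^ (-γ))) ∧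
      Real.logb 2 (X.card) ≤ c₂ * (M : ℝ) ^ ((1 : ℝ) + h)

set_option maxHeartbeats 1000000 in
/-- In a Hilbert space, the sets `Σ̃^{π,c}_M` of linear combinations of at
most `M` orthonormalized atoms among the first `π(M)` dictionary elements, with coefficients
bounded by `c`, form an `∞`-encodable sequence (for `π` of at most polynomial growth). -/
theorem orthonormalized_dictionary_infty_encodable {F : Type*} [NormedAddCommGroup F]
    [InnerProductSpace ℝ F] [CompleteSpace F]
    (φ : ℕ → F) (π : ℕ → ℕ)
    (hπ : ∃ Cp : ℝ, 0 < Cp ∧ ∃ k : ℕ, ∀ M : ℕ, 1 ≤ M → (π M : ℝ) ≤ Cp * (M : ℝ) ^ k)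
    (ont : Finset ℕ → ℕ → F)
    (hont : ∀ I : Finset ℕ, Orthonormal ℝ (fun i : I => ont I i))
    (c : ℝ) (hc : 0 < c) :
    ∀ γ : ℝ, 0 < γ →
      IsEncodable
        (fun M : ℕ =>
          {f : F | ∃ I : Finset ℕ, I ⊆ Finset.range (π M) ∧ I.card ≤ M ∧
            ∃ ct : ℕ → ℝ, (∀ i ∈ I, |ct i| ≤ c) ∧ f = ∑ i ∈ I, ct i • ont I i}) γ := by
  classical
  obtain ⟨Cp, hCp, k, hπk⟩ := hπ
  intro γ hγ h hh
  set g : ℕ := ⌈γ⌉₊ with hgdef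
  have hγg : γ ≤ g := Nat.le_ceil γ
  obtain ⟨Ch, hCh, hChle⟩ := logb_nat_le hh
  set A : ℝ := Real.logb 2 (Cp + 1) with hAdef
  have hA : 0 ≤ A := Real.logb_nonneg one_lt_two (by linarith)
  refine ⟨c, hc, 1 + A + (k + g + 2) * Ch, by positivity, fun M hM => ?_⟩
  have hM0 : (0 : ℝ) < M := by exact_mod_cast hM
  have hM1 : (1 : ℝ) ≤ M := by exact_mod_cast hM
  -- the grid
  set K : ℕ := M ^ (g + 1) with hKdef
  have hK1 : 1 ≤ K := Nat.one_le_pow _ _ hM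
  have hK0 : (0 : ℝ) < K := by exact_mod_cast hK1
  set G : Finset ℝ := (Finset.range K).image (fun j : ℕ => -c + c * (2 * (j : ℝ) + 1) / K)
    with hGdef
  have hGmem : ∀ x ∈ G, |x| ≤ c := by
    intro x hx
    obtain ⟨j, hj, rfl⟩ := Finset.mem_image.mp hx
    exact grid_pt_abs_le hc hK1 (Finset.mem_range.mp hj)
  -- the supports
  set SI : Finset (Finset ℕ) :=
    (Finset.range (π M)).powerset.filter (fun I => I.card ≤ M) with hSIdef
  -- the covering set
  set X : Finset F := SI.biUnion (fun I =>
    (I.pi (fun _ => G)).image (fun t => ∑ i ∈ I.attach, t i.1 i.2 • ont I i)) with hXdef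
  refine ⟨X, ?_, ?_, ?_⟩
  · -- X ⊆ S M
    intro x hx
    obtain ⟨I, hISI, hxI⟩ := Finset.mem_biUnion.mp hx
    obtain ⟨t, htpi, rfl⟩ := Finset.mem_image.mp hxI
    obtain ⟨hIr, hIc⟩ := Finset.mem_filter.mp hISI
    refine ⟨I, Finset.mem_powerset.mp hIr, hIc, fun i => if hi : i ∈ I then t i hi else 0,
      ?_, ?_⟩
    · intro i hi
      simp only [dif_pos hi]
      exact hGmem _ (Finset.mem_pi.mp htpi i hi)
    · rw [← Finset.sum_attach I (fun i => (if hi : i ∈ I then t i hi else 0) • ont I i)]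
      refine Finset.sum_congr rfl fun i _ => ?_
      rw [dif_pos i.2]
  · -- covering
    intro f hf
    obtain ⟨I, hIr, hIc, ct, hct, rfl⟩ := hf
    choose tt httG httd using fun (i : ℕ) (hi : i ∈ I) =>
      grid_approx hc hK1 (hct i hi)
    -- grid point gᵢ := -c + c(2 ttᵢ + 1)/K
    set t : ∀ i ∈ I, ℝ := fun i hi => -c + c * (2 * ((tt i hi : ℕ) : ℝ) + 1) / K with htdef
    have htpi : t ∈ I.pi (fun _ => G) := by
      rw [Finset.mem_pi]
      intro i hi
      exact Finset.mem_image.mpr ⟨tt i hi, httG i hi, rfl⟩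
    set y : F := ∑ i ∈ I.attach, t i.1 i.2 • ont I i with hydef
    have hyX : y ∈ X := Finset.mem_biUnion.mpr
      ⟨I, Finset.mem_filter.mpr ⟨Finset.mem_powerset.mpr hIr, hIc⟩,
        Finset.mem_image.mpr ⟨t, htpi, rfl⟩⟩
    refine Set.mem_iUnion₂.mpr ⟨y, hyX, ?_⟩
    rw [Metric.mem_closedBall, dist_eq_norm]
    -- the difference
    set d : ↥I → ℝ := fun i => ct i.1 - t i.1 i.2 with hddef
    have hdiff : (∑ i ∈ I, ct i • ont I i) - y = ∑ i : ↥I, d i • (fun i : ↥I => ont I i.1) i := by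
      rw [hydef, Finset.univ_eq_attach,
        ← Finset.sum_attach I (fun i => ct i • ont I i), ← Finset.sum_sub_distrib]
      refine Finset.sum_congr rfl fun i _ => ?_
      rw [hddef]
      simp [sub_smul]
    have hnorm2 : ‖(∑ i ∈ I, ct i • ont I i) - y‖ ^ 2 = ∑ i : ↥I, (d i) ^ 2 := by
      rw [hdiff, ← real_inner_self_eq_norm_sq]
      rw [(hont I).inner_sum d d Finset.univ]
      simp [sq]
    have hdb : ∀ i : ↥I, (d i) ^ 2 ≤ (c / K) ^ 2 := by
      intro i
      have := httd i.1 i.2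
      have habs : |d i| ≤ c / K := this
      calc (d i) ^ 2 = |d i| ^ 2 := (sq_abs _).symm
        _ ≤ (c / K) ^ 2 := by
            apply pow_le_pow_left₀ (abs_nonneg _) habs
    have hsum : ∑ i : ↥I, (d i) ^ 2 ≤ (M : ℝ) * (c / K) ^ 2 := by
      calc ∑ i : ↥I, (d i) ^ 2 ≤ ∑ _i : ↥I, (c / K) ^ 2 :=
            Finset.sum_le_sum fun i _ => hdb i
        _ = (I.card : ℝ) * (c / K) ^ 2 := by
            rw [Finset.sum_const, Finset.card_univ, Fintype.card_coe]
            simp [nsmul_eq_mul]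
        _ ≤ (M : ℝ) * (c / K) ^ 2 := by
            apply mul_le_mul_of_nonneg_right _ (by positivity)
            exact_mod_cast hIc
    have hnorm : ‖(∑ i ∈ I, ct i • ont I i) - y‖ ≤ Real.sqrt M * (c / K) := by
      have h1 : ‖(∑ i ∈ I, ct i • ont I i) - y‖ =
          Real.sqrt (‖(∑ i ∈ I, ct i • ont I i) - y‖ ^ 2) := by
        rw [Real.sqrt_sq (norm_nonneg _)]
      rw [h1, hnorm2]
      calc Real.sqrt (∑ i : ↥I, (d i) ^ 2) ≤ Real.sqrt ((M : ℝ) * (c / K) ^ 2) :=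
            Real.sqrt_le_sqrt hsum
        _ = Real.sqrt M * (c / K) := by
            rw [Real.sqrt_mul (by positivity), Real.sqrt_sq (by positivity)]
    refine hnorm.trans ?_
    -- √M * c/K ≤ c M^{-γ}
    have hKr : (K : ℝ) = (M : ℝ) ^ ((g : ℝ) + 1) := by
      rw [hKdef]
      push_cast
      rw [← Real.rpow_natCast (M : ℝ) (g + 1)]
      push_cast
      ring_nf
    have hkey : Real.sqrt M * (M : ℝ) ^ γ ≤ (K : ℝ) := by
      rw [hKr, Real.sqrt_eq_rpow, ← Real.rpow_add hM0]
      exact Real.rpow_le_rpow_of_exponent_le hM1 (by linarith)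
    have hMγ : (0 : ℝ) < (M : ℝ) ^ γ := Real.rpow_pos_of_pos hM0 γ
    have he1 : c * (M : ℝ) ^ (-γ) = c / (M : ℝ) ^ γ := by
      rw [Real.rpow_neg hM0.le, div_eq_mul_inv]
    have he2 : Real.sqrt M * (c / K) = Real.sqrt M * c / K := by ring
    rw [he1, he2, div_le_div_iff₀ hK0 hMγ]
    nlinarith [hkey, hc.le, Real.sqrt_nonneg (M : ℝ)]
  · -- cardinality
    set L : ℝ := Real.logb 2 (M : ℝ) with hLdef
    have hL0 : 0 ≤ L := Real.logb_nonneg one_lt_two hM1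
    have hLh : L ≤ Ch * (M : ℝ) ^ h := hChle M hM
    have hMh1 : (1 : ℝ) ≤ (M : ℝ) ^ h := Real.one_le_rpow hM1 hh.le
    -- counting
    have hpicard : ∀ I ∈ SI, ((I.pi fun _ => G).card ≤ K ^ M) := by
      intro I hI
      obtain ⟨_, hIc⟩ := Finset.mem_filter.mp hI
      calc (I.pi fun _ => G).card = ∏ _i ∈ I, G.card := Finset.card_pi _ _
        _ ≤ ∏ _i ∈ I, K := Finset.prod_le_prod' fun _ _ =>
            (Finset.card_image_le).trans (le_of_eq (Finset.card_range K))
        _ = K ^ I.card := Finset.prod_const K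
        _ ≤ K ^ M := Nat.pow_le_pow_right hK1 hIc
    have hSIcard : SI.card ≤ (M + 1) * (π M + 1) ^ M := by
      have hsub : SI ⊆ (Finset.range (M + 1)).biUnion
          (fun j => (Finset.range (π M)).powersetCard j) := by
        intro I hI
        obtain ⟨hIr, hIc⟩ := Finset.mem_filter.mp hI
        exact Finset.mem_biUnion.mpr ⟨I.card, Finset.mem_range.mpr (by omega),
          Finset.mem_powersetCard.mpr ⟨Finset.mem_powerset.mp hIr, rfl⟩⟩
      calc SI.card ≤ _ := Finset.card_le_card hsub
        _ ≤ ∑ j ∈ Finset.range (M + 1), ((Finset.range (π M)).powersetCard j).card :=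
            Finset.card_biUnion_le
        _ ≤ ∑ _j ∈ Finset.range (M + 1), (π M + 1) ^ M := by
            apply Finset.sum_le_sum
            intro j hj
            rw [Finset.card_powersetCard, Finset.card_range]
            calc (π M).choose j ≤ (π M) ^ j := Nat.choose_le_pow _ _
              _ ≤ (π M + 1) ^ j := Nat.pow_le_pow_left (by omega) _
              _ ≤ (π M + 1) ^ M := Nat.pow_le_pow_right (by omega)
                  (Nat.lt_succ_iff.mp (Finset.mem_range.mp hj))
        _ = (M + 1) * (π M + 1) ^ M := by
            rw [Finset.sum_const, Finset.card_range, smul_eq_mul]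
    have hXcard : X.card ≤ (M + 1) * ((π M + 1) ^ M * K ^ M) := by
      calc X.card ≤ ∑ I ∈ SI,
            ((I.pi fun _ => G).image (fun t => ∑ i ∈ I.attach, t i.1 i.2 • ont I i)).card :=
            Finset.card_biUnion_le
        _ ≤ ∑ I ∈ SI, K ^ M := Finset.sum_le_sum fun I hI =>
            (Finset.card_image_le).trans (hpicard I hI)
        _ = SI.card * K ^ M := by rw [Finset.sum_const, smul_eq_mul]
        _ ≤ ((M + 1) * (π M + 1) ^ M) * K ^ M := Nat.mul_le_mul_right _ hSIcard
        _ = (M + 1) * ((π M + 1) ^ M * K ^ M) := by ring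
    have hXne : X.Nonempty := by
      have hpi0 : ((∅ : Finset ℕ).pi fun _ => G).Nonempty := Finset.card_pos.mp (by simp)
      obtain ⟨t0, ht0⟩ := hpi0
      exact ⟨_, Finset.mem_biUnion.mpr ⟨∅,
        Finset.mem_filter.mpr ⟨Finset.mem_powerset.mpr (Finset.empty_subset _), by simp⟩,
        Finset.mem_image_of_mem _ ht0⟩⟩
    have hXpos : (0 : ℝ) < X.card := by exact_mod_cast Finset.card_pos.mpr hXne
    have hXle : (X.card : ℝ) ≤ ((M : ℝ) + 1) * (((π M : ℝ) + 1) * K) ^ M := by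
      rw [mul_pow]
      exact_mod_cast hXcard
    have hbase : ((π M : ℝ) + 1) * K ≤ (Cp + 1) * (M : ℝ) ^ (k + g + 1) := by
      have hMk1 : (1 : ℝ) ≤ (M : ℝ) ^ k := by
        calc (1 : ℝ) = 1 ^ k := (one_pow k).symm
          _ ≤ (M : ℝ) ^ k := pow_le_pow_left₀ zero_le_one hM1 k
      have h1 : (π M : ℝ) + 1 ≤ (Cp + 1) * (M : ℝ) ^ k := by
        have := hπk M hM
        nlinarith
      have hKval : (K : ℝ) = (M : ℝ) ^ (g + 1) := by rw [hKdef]; push_cast; ring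
      rw [hKval]
      calc ((π M : ℝ) + 1) * (M : ℝ) ^ (g + 1)
          ≤ ((Cp + 1) * (M : ℝ) ^ k) * (M : ℝ) ^ (g + 1) :=
            mul_le_mul_of_nonneg_right h1 (by positivity)
        _ = (Cp + 1) * (M : ℝ) ^ (k + g + 1) := by
            rw [mul_assoc, ← pow_add, add_assoc]
    have hchain : (X.card : ℝ) ≤ ((M : ℝ) + 1) * ((Cp + 1) * (M : ℝ) ^ (k + g + 1)) ^ M := by
      refine hXle.trans ?_
      apply mul_le_mul_of_nonneg_left _ (by positivity)
      exact pow_le_pow_left₀ (by positivity) hbase M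
    have hlog1 : Real.logb 2 X.card ≤
        Real.logb 2 (((M : ℝ) + 1) * ((Cp + 1) * (M : ℝ) ^ (k + g + 1)) ^ M) :=
      Real.logb_le_logb_of_le one_lt_two hXpos hchain
    have hexp : Real.logb 2 (((M : ℝ) + 1) * ((Cp + 1) * (M : ℝ) ^ (k + g + 1)) ^ M)
        = Real.logb 2 ((M : ℝ) + 1) + (M : ℝ) * (A + ((k : ℝ) + g + 1) * L) := by
      rw [Real.logb_mul (by positivity) (ne_of_gt (by positivity)),
        Real.logb_pow, Real.logb_mul (ne_of_gt (by positivity)) (ne_of_gt (by positivity)),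
        Real.logb_pow, hAdef, hLdef]
      push_cast
      ring
    have hlogM1 : Real.logb 2 ((M : ℝ) + 1) ≤ 1 + L := by
      have h2M : Real.logb 2 ((M : ℝ) + 1) ≤ Real.logb 2 (2 * M) :=
        Real.logb_le_logb_of_le one_lt_two (by positivity) (by linarith)
      rw [Real.logb_mul two_ne_zero (ne_of_gt hM0)] at h2M
      rw [Real.logb_self_eq_one one_lt_two] at h2M
      exact h2M
    have hfinal : 1 + L + (M : ℝ) * (A + ((k : ℝ) + g + 1) * L)
        ≤ (1 + A + ((k : ℝ) + g + 2) * Ch) * (M : ℝ) ^ ((1 : ℝ) + h) := by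
      have hrw : (M : ℝ) ^ ((1 : ℝ) + h) = (M : ℝ) * (M : ℝ) ^ h := by
        rw [Real.rpow_add hM0, Real.rpow_one]
      rw [hrw]
      have hs1 : 1 + L ≤ (M : ℝ) * (1 + L) := le_mul_of_one_le_left (by linarith) hM1
      have hs2 : 1 + A + ((k : ℝ) + g + 2) * L ≤
          (1 + A) * (M : ℝ) ^ h + ((k : ℝ) + g + 2) * (Ch * (M : ℝ) ^ h) := by
        have ha1 : 1 + A ≤ (1 + A) * (M : ℝ) ^ h :=
          le_mul_of_one_le_right (by linarith) hMh1
        have ha2 : ((k : ℝ) + g + 2) * L ≤ ((k : ℝ) + g + 2) * (Ch * (M : ℝ) ^ h) :=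
          mul_le_mul_of_nonneg_left hLh (by positivity)
        linarith
      calc 1 + L + (M : ℝ) * (A + ((k : ℝ) + g + 1) * L)
          ≤ (M : ℝ) * (1 + L) + (M : ℝ) * (A + ((k : ℝ) + g + 1) * L) := by linarith
        _ = (M : ℝ) * (1 + A + ((k : ℝ) + g + 2) * L) := by ring
        _ ≤ (M : ℝ) * ((1 + A) * (M : ℝ) ^ h + ((k : ℝ) + g + 2) * (Ch * (M : ℝ) ^ h)) :=
            mul_le_mul_of_nonneg_left hs2 (le_of_lt hM0)
        _ = (1 + A + ((k : ℝ) + g + 2) * Ch) * ((M : ℝ) * (M : ℝ) ^ h) := by ring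
    calc Real.logb 2 X.card
        ≤ Real.logb 2 ((M : ℝ) + 1) + (M : ℝ) * (A + ((k : ℝ) + g + 1) * L) := by
          rw [← hexp]; exact hlog1
      _ ≤ 1 + L + (M : ℝ) * (A + ((k : ℝ) + g + 1) * L) := by linarith
      _ ≤ (1 + A + ((k : ℝ) + g + 2) * Ch) * (M : ℝ) ^ ((1 : ℝ) + h) := hfinal

end
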